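/- If x ∈ ℤ^m and Q ∈ End(ℤ^m) are such that x is a periodic point of Q of period exactly k (i.e., xQ^k = x and xQ^i ≠ x for 1 ≤ i < k), then there exists an automorphism P ∈ GL_m(ℤ) of order exactly k. -/

import Mathlib

open Matrix

-- block diagonal monoid hom
def blockHom (ι κ : Type) [Fintype ι] [Fintype κ] [DecidableEq ι] [DecidableEq κ] :
    Matrix ι ι ℤ →* Matrix (ι ⊕ κ) (ι ⊕ κ) ℤ where
  toFun A := Matrix.fromBlocks A 0 0 1
  map_one' := Matrix.fromBlocks_one
  map_mul' A B := by
    rw [Matrix.fromBlocks_multiply]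
    simp

lemma blockHom_inj (ι κ : Type) [Fintype ι] [Fintype κ] [DecidableEq ι] [DecidableEq κ] :
    Function.Injective (blockHom ι κ) := by
  intro A B h
  have := congrArg Matrix.toBlocks₁₁ h
  simpa [blockHom, Matrix.toBlocks_fromBlocks₁₁] using this

set_option maxHeartbeats 1000000 in
theorem stmt11 (m k : ℕ) (hk : 1 ≤ k) (x : Fin m → ℤ)
    (Q : Matrix (Fin m) (Fin m) ℤ)
    (hxk : Matrix.vecMul x (Q ^ k) = x)
    (hmin : ∀ i : ℕ, 1 ≤ i → i < k → Matrix.vecMul x (Q ^ i) ≠ x) :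
    ∃ P : Matrix.GeneralLinearGroup (Fin m) ℤ, orderOf P = k := by
  classical
  set S : Set (Fin m → ℤ) := Set.range (fun i : ℕ => Matrix.vecMul x (Q ^ i)) with hS
  set L : Submodule ℤ (Fin m → ℤ) := Submodule.span ℤ S with hL
  set f : (Fin m → ℤ) →ₗ[ℤ] (Fin m → ℤ) := Q.vecMulLinear with hf
  have hmaps : ∀ y ∈ L, f y ∈ L := by
    intro y hy
    induction hy using Submodule.span_induction with
    | mem y hy =>
      obtain ⟨i, rfl⟩ := hy
      apply Submodule.subset_span
      exact ⟨i + 1, by simp [hf, Matrix.vecMul_vecMul, pow_succ]⟩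
    | zero => simp
    | add a b _ _ ha hb => rw [map_add]; exact L.add_mem ha hb
    | smul c a _ ha => rw [_root_.map_smul]; exact L.smul_mem c ha
  set g : L →ₗ[ℤ] L := f.restrict hmaps with hg
  have gpow : ∀ (n : ℕ) (y : L), (((g ^ n) y : L) : Fin m → ℤ) = Matrix.vecMul (y : Fin m → ℤ) (Q ^ n) := by
    intro n
    induction n with
    | zero => intro y; simp
    | succ n ih =>
      intro y
      rw [pow_succ', Module.End.mul_apply]
      have hgy : ∀ z : L, ((g z : L) : Fin m → ℤ) = Matrix.vecMul (z : Fin m → ℤ) Q := by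
        intro z; simp [hg, LinearMap.restrict_apply, hf]
      rw [hgy ((g ^ n) y), ih y, Matrix.vecMul_vecMul, ← pow_succ]
  -- everything in L is fixed by Q^k
  have hfix : ∀ y ∈ L, Matrix.vecMul y (Q ^ k) = y := by
    intro y hy
    induction hy using Submodule.span_induction with
    | mem y hy =>
      obtain ⟨i, rfl⟩ := hy
      rw [Matrix.vecMul_vecMul, ← pow_add, add_comm, pow_add, ← Matrix.vecMul_vecMul, hxk]
    | zero => simp
    | add a b _ _ ha hb => rw [Matrix.add_vecMul, ha, hb]
    | smul c a _ ha => rw [Matrix.smul_vecMul, ha]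
  have hgk : g ^ k = 1 := by
    apply LinearMap.ext
    intro y
    apply Subtype.ext
    rw [gpow k y]
    exact hfix y y.2
  have hxL : x ∈ L := by
    apply Submodule.subset_span
    exact ⟨0, by simp⟩
  -- g as a unit
  set u : (Module.End ℤ L)ˣ :=
    ⟨g, g ^ (k - 1), by rw [← pow_succ', Nat.sub_add_cancel hk]; exact hgk,
      by rw [← pow_succ, Nat.sub_add_cancel hk]; exact hgk⟩ with hu
  have hou : orderOf u = k := by
    rw [orderOf_eq_iff hk]
    constructor
    · apply Units.ext; rw [Units.val_pow_eq_pow_val]; rw [Units.val_one]; exact hgk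
    · intro i hik hi h
      apply hmin i hi hik
      have : (g ^ i) ⟨x, hxL⟩ = ⟨x, hxL⟩ := by
        have := congrArg Units.val h
        rw [Units.val_pow_eq_pow_val] at this
        rw [this]; rfl
      have := congrArg (Subtype.val) this
      rw [gpow i ⟨x, hxL⟩] at this
      exact this
  -- basis of L
  set ι := Module.Free.ChooseBasisIndex ℤ L with hι
  set b : Module.Basis ι ℤ L := Module.Free.chooseBasis ℤ L with hb
  have hcard : Fintype.card ι ≤ m := by
    rw [← Module.finrank_eq_card_chooseBasisIndex]
    calc Module.finrank ℤ L ≤ Module.finrank ℤ (Fin m → ℤ) := Submodule.finrank_le L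
    _ = m := by simp
  -- equiv
  have hce : Fintype.card (ι ⊕ Fin (m - Fintype.card ι)) = Fintype.card (Fin m) := by
    simp [Nat.add_sub_cancel' hcard]
  set e : (ι ⊕ Fin (m - Fintype.card ι)) ≃ Fin m := Fintype.equivOfCardEq hce with he
  -- monoid hom chain
  set α : Module.End ℤ L ≃ₐ[ℤ] Matrix ι ι ℤ := LinearMap.toMatrixAlgEquiv b with hα
  set ψ : Matrix ι ι ℤ →* Matrix (Fin m) (Fin m) ℤ :=
    (Matrix.reindexAlgEquiv ℤ ℤ e).toRingEquiv.toMonoidHom.comp (blockHom ι (Fin (m - Fintype.card ι))) with hψ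
  have hψinj : Function.Injective ψ := by
    intro A B h
    apply blockHom_inj ι (Fin (m - Fintype.card ι))
    apply (Matrix.reindexAlgEquiv ℤ ℤ e).injective
    simpa [hψ] using h
  set φ : (Module.End ℤ L)ˣ →* (Matrix (Fin m) (Fin m) ℤ)ˣ :=
    Units.map (ψ.comp α.toRingEquiv.toMonoidHom) with hφ
  refine ⟨φ u, ?_⟩
  rw [← hou]
  apply orderOf_injective
  apply Units.map_injective
  intro A B h
  exact α.injective (hψinj (by simpa using h))
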